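/- arXiv:2109.08943 — 2 statements merged into one kernel-verified Lean document; each statement's English description precedes it below -/
import Mathlib

section
/- Let N be a structure with a (κ,Δ)-decomposition N = A ⊔ ⨆_{i∈I} B_i (a κ-partition that is a Δ-congruence over A), with κ infinite and |Δ| ≤ κ. Then for every subset J ⊆ I, letting B_J = ⋃_{j∈J} B_j, the number of Δ-types over A ∪ B_J realized by finite tuples from N − (A ∪ B_J) is at most 2^κ. -/
open FirstOrder Cardinal

variable {L : FirstOrder.Language.{0,0}} {N : Type} [L.Structure N]

/-- The Δ-type of a tuple `c` (indexed by `ι`) over the parameter set `A`: the set of triples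
`(n, φ, v)` where `φ ∈ Δ` has free variables `Fin n`, each variable is assigned either a
coordinate of `c` or a parameter in `A`, and `φ` is satisfied under that assignment. -/
def DType (Δ : Set (Σ n, L.Formula (Fin n))) (A : Set N) {ι : Type} (c : ι → N) :
    Set (Σ n, L.Formula (Fin n) × (Fin n → ι ⊕ A)) :=
  { p | (⟨p.1, p.2.1⟩ : Σ n, L.Formula (Fin n)) ∈ Δ ∧
      p.2.1.Realize (fun i => Sum.elim c (fun b => (b : N)) (p.2.2 i)) }

/-- `c ∼_Δ d`: both tuples are injective (no repeated elements) and can be written as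
concatenations of pieces, each piece lying inside a single part `B i` (with pairwise distinct
parts), such that corresponding pieces have the same Δ-type over `A`. -/
def SimD (Δ : Set (Σ n, L.Formula (Fin n))) (A : Set N) {I : Type} (B : I → Set N)
    {k : ℕ} (c d : Fin k → N) : Prop :=
  Function.Injective c ∧ Function.Injective d ∧
  ∃ (m : ℕ) (P : Fin k → Fin m) (fc fd : Fin m → I),
    Function.Injective fc ∧ Function.Injective fd ∧
    (∀ j, c j ∈ B (fc (P j))) ∧ (∀ j, d j ∈ B (fd (P j))) ∧
    ∀ ℓ : Fin m, DType Δ A (fun j : {j // P j = ℓ} => c j) =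
      DType Δ A (fun j : {j // P j = ℓ} => d j)

/-- The partition `N = A ⊔ ⨆ᵢ B i` is a Δ-congruence over `A`. -/
def IsCongruence (Δ : Set (Σ n, L.Formula (Fin n))) (A : Set N) {I : Type} (B : I → Set N) :
    Prop :=
  ∀ (k : ℕ) (c d : Fin k → N), (∀ j, c j ∉ A) → (∀ j, d j ∉ A) →
    SimD Δ A B c d → DType Δ A c = DType Δ A d

/-- The Δ-types over `A` realized by finite tuples from `N - A`. -/
def RealizedTypes (Δ : Set (Σ n, L.Formula (Fin n))) (A : Set N) :
    Set (Σ k : ℕ, Set (Σ n, L.Formula (Fin n) × (Fin n → Fin k ⊕ A))) :=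
  { q | ∃ c : Fin q.1 → N, (∀ j, c j ∉ A) ∧ q.2 = DType Δ A c }

/-- The Δ-types over `A` realized by single elements of `N - A`. -/
def Realized1Types (Δ : Set (Σ n, L.Formula (Fin n))) (A : Set N) :
    Set (Set (Σ n, L.Formula (Fin n) × (Fin n → Fin 1 ⊕ A))) :=
  { s | ∃ a : N, a ∉ A ∧ s = DType Δ A (fun _ : Fin 1 => a) }

/-- The set of quantifier-free formulas of `L`. -/
def QFset (L : FirstOrder.Language.{0,0}) : Set (Σ n, L.Formula (Fin n)) :=
  { p | FirstOrder.Language.BoundedFormula.IsQF p.2 }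

lemma mem_DType_comp (Δ : Set (Σ n, L.Formula (Fin n))) (A : Set N) {ι ι' : Type}
    (g : ι' → ι) (c : ι → N) (p : Σ n, L.Formula (Fin n) × (Fin n → ι' ⊕ A)) :
    p ∈ DType Δ A (fun j => c (g j)) ↔
      (⟨p.1, p.2.1, fun i => Sum.map g id (p.2.2 i)⟩ :
        Σ n, L.Formula (Fin n) × (Fin n → ι ⊕ A)) ∈ DType Δ A c := by
  simp only [DType, Set.mem_setOf_eq]
  constructor <;> rintro ⟨h1, h2⟩ <;> refine ⟨h1, ?_⟩ <;>
    · convert h2 using 2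
      rename_i i
      rcases hx : p.2.2 i with j | a <;> rfl

lemma DType_comp_congr (Δ : Set (Σ n, L.Formula (Fin n))) (A : Set N) {ι ι' : Type}
    (g : ι' → ι) {c d : ι → N} (h : DType Δ A c = DType Δ A d) :
    DType Δ A (fun j => c (g j)) = DType Δ A (fun j => d (g j)) := by
  ext p
  rw [mem_DType_comp Δ A g c, h, ← mem_DType_comp Δ A g d]

set_option maxHeartbeats 1000000 in
lemma key_subset {I : Type} (Δ : Set (Σ n, L.Formula (Fin n))) (A : Set N) (B : I → Set N)
    (hdisjA : ∀ i, Disjoint A (B i)) (hdisj : ∀ i j, i ≠ j → Disjoint (B i) (B j))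
    (hcover : A ∪ ⋃ i, B i = Set.univ)
    (hcong : IsCongruence Δ A B) (J : Set I) {k : ℕ} {c d : Fin k → N}
    (hc : ∀ j, c j ∉ A ∪ ⋃ j' ∈ J, B j') (hd : ∀ j, d j ∉ A ∪ ⋃ j' ∈ J, B j')
    (Heq : ∀ j j', c j = c j' ↔ d j = d j')
    (Hpt : ∀ j j', (∃ i, c j ∈ B i ∧ c j' ∈ B i) ↔ (∃ i, d j ∈ B i ∧ d j' ∈ B i))
    (HT : DType Δ A c = DType Δ A d) :
    DType Δ (A ∪ ⋃ j' ∈ J, B j') c ⊆ DType Δ (A ∪ ⋃ j' ∈ J, B j') d := by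
  classical
  set AJ : Set N := A ∪ ⋃ j' ∈ J, B j' with hAJ
  have part_unique : ∀ {x : N} {i i' : I}, x ∈ B i → x ∈ B i' → i = i' := by
    intro x i i' h h'
    by_contra hne
    exact Set.disjoint_left.mp (hdisj i i' hne) h h'
  have exB : ∀ x : N, x ∉ A → ∃ i, x ∈ B i := by
    intro x hx
    have hx' : x ∈ A ∪ ⋃ i, B i := by rw [hcover]; trivial
    rcases hx' with h | h
    · exact absurd h hx
    · exact Set.mem_iUnion.mp h
  have notA_of_notAJ : ∀ {x : N}, x ∉ AJ → x ∉ A := fun hx hxA => hx (Or.inl hxA)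
  have notJ_of_notAJ : ∀ {x : N} {i : I}, x ∉ AJ → x ∈ B i → i ∉ J := by
    intro x i hx hxB hiJ
    exact hx (Or.inr (Set.mem_biUnion hiJ hxB))
  have inJ_of_AJ_notA : ∀ {x : N}, x ∈ AJ → x ∉ A → ∃ i ∈ J, x ∈ B i := by
    intro x hx hxA
    rcases hx with h | h
    · exact absurd h hxA
    · rcases Set.mem_iUnion₂.mp h with ⟨i, hi, hxi⟩
      exact ⟨i, hi, hxi⟩
  -- deduplication of c (and d)
  have hone : ∀ j : Fin k, j ∈ Finset.univ.filter (fun j' => c j' = c j) := by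
    intro j; simp
  set rp : Fin k → Fin k :=
    fun j => (Finset.univ.filter (fun j' => c j' = c j)).min' ⟨j, hone j⟩ with hrpdef
  have hrp : ∀ j, c (rp j) = c j := by
    intro j
    have h1 : rp j ∈ Finset.univ.filter (fun j' => c j' = c j) := by
      simp only [hrpdef]; exact Finset.min'_mem _ _
    exact (Finset.mem_filter.mp h1).2
  have rp_eq_of : ∀ j j', c j = c j' → rp j = rp j' := by
    intro j j' h
    apply le_antisymm
    · rw [hrpdef]
      apply Finset.min'_le
      exact Finset.mem_filter.mpr ⟨Finset.mem_univ _, (hrp j').trans h.symm⟩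
    · rw [hrpdef]
      apply Finset.min'_le
      exact Finset.mem_filter.mpr ⟨Finset.mem_univ _, (hrp j).trans h⟩
  have rp_idem : ∀ j, rp (rp j) = rp j := fun j => rp_eq_of _ _ (hrp j)
  have rp_d : ∀ j, d (rp j) = d j := fun j => (Heq _ _).mp (hrp j)
  set s : Finset (Fin k) := Finset.univ.image rp with hs
  set e : Fin s.card → Fin k := fun t => ((s.orderIsoOfFin rfl) t : Fin k) with he
  have he_mem : ∀ t, e t ∈ s := fun t => ((s.orderIsoOfFin rfl) t).2
  have he_inj : Function.Injective e := by
    intro t t' h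
    exact (s.orderIsoOfFin rfl).injective (Subtype.ext h)
  have rp_mem_s : ∀ j, rp j ∈ s := fun j => Finset.mem_image_of_mem rp (Finset.mem_univ j)
  have rp_fix : ∀ x ∈ s, rp x = x := by
    intro x hx
    rcases Finset.mem_image.mp hx with ⟨j, _, rfl⟩
    exact rp_idem j
  have ce_inj : ∀ t t', c (e t) = c (e t') → t = t' := by
    intro t t' h
    have h2 : rp (e t) = rp (e t') := rp_eq_of _ _ h
    rw [rp_fix _ (he_mem t), rp_fix _ (he_mem t')] at h2
    exact he_inj h2
  set esymm : Fin k → Fin s.card := fun j => (s.orderIsoOfFin rfl).symm ⟨rp j, rp_mem_s j⟩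
    with hesymm
  have he_esymm : ∀ j, e (esymm j) = rp j := by
    intro j
    rw [he, hesymm]
    simp
  -- the formula to transfer
  rintro ⟨n, φ, v⟩ hp
  obtain ⟨hpΔ, hpR⟩ := hp
  -- the finitely many parameters outside A
  set f : Fin k ⊕ ↥AJ → Finset N :=
    fun y => Sum.elim (fun _ => (∅ : Finset N))
      (fun a : ↥AJ => if (a : N) ∈ A then (∅ : Finset N) else {(a : N)}) y with hf
  set F : Finset N := Finset.univ.biUnion (fun i => f (v i)) with hF
  have hF_mem : ∀ (i : Fin n) (a : ↥AJ), v i = Sum.inr a → (a : N) ∉ A → (a : N) ∈ F := by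
    intro i a hv ha
    apply Finset.mem_biUnion.mpr
    refine ⟨i, Finset.mem_univ i, ?_⟩
    rw [hv]
    simp only [hf, Sum.elim_inr, if_neg ha]
    exact Finset.mem_singleton_self _
  have hF_prop : ∀ x ∈ F, x ∈ AJ ∧ x ∉ A := by
    intro x hx
    rcases Finset.mem_biUnion.mp hx with ⟨i, _, hxi⟩
    rcases hv : v i with j | a
    · rw [hv] at hxi; simp only [hf, Sum.elim_inl] at hxi
      exact absurd hxi (Finset.notMem_empty x)
    · rw [hv] at hxi; simp only [hf, Sum.elim_inr] at hxi
      by_cases ha : (a : N) ∈ A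
      · rw [if_pos ha] at hxi
        exact absurd hxi (Finset.notMem_empty x)
      · rw [if_neg ha] at hxi
        have hx2 : x = (a : N) := Finset.mem_singleton.mp hxi
        subst hx2
        exact ⟨a.2, ha⟩
  set b : Fin F.card → N := fun t => ((F.equivFin.symm t : ↥F) : N) with hb
  have hb_mem : ∀ t, b t ∈ F := fun t => (F.equivFin.symm t).2
  have hb_inj : Function.Injective b :=
    fun t t' h => F.equivFin.symm.injective (Subtype.ext h)
  have hb_Finv : ∀ (x : N) (hx : x ∈ F), b (F.equivFin ⟨x, hx⟩) = x := by
    intro x hx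
    simp only [hb, Equiv.symm_apply_apply]
  have hbAJ : ∀ t, b t ∈ AJ := fun t => (hF_prop _ (hb_mem t)).1
  have hbnA : ∀ t, b t ∉ A := fun t => (hF_prop _ (hb_mem t)).2
  have hbJ : ∀ t, ∃ i ∈ J, b t ∈ B i := fun t => inJ_of_AJ_notA (hbAJ t) (hbnA t)
  -- the extended tuples
  set c' : Fin (s.card + F.card) → N := Fin.append (fun t => c (e t)) b with hc'
  set d' : Fin (s.card + F.card) → N := Fin.append (fun t => d (e t)) b with hd'
  have c'_left : ∀ t, c' (Fin.castAdd F.card t) = c (e t) := by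
    intro t; rw [hc']; exact Fin.append_left _ _ t
  have c'_right : ∀ t, c' (Fin.natAdd s.card t) = b t := by
    intro t; rw [hc']; exact Fin.append_right _ _ t
  have d'_left : ∀ t, d' (Fin.castAdd F.card t) = d (e t) := by
    intro t; rw [hd']; exact Fin.append_left _ _ t
  have d'_right : ∀ t, d' (Fin.natAdd s.card t) = b t := by
    intro t; rw [hd']; exact Fin.append_right _ _ t
  have split : ∀ j : Fin (s.card + F.card),
      (∃ t, j = Fin.castAdd F.card t) ∨ (∃ t, j = Fin.natAdd s.card t) :=
    fun j => Fin.addCases (fun t => Or.inl ⟨t, rfl⟩) (fun t => Or.inr ⟨t, rfl⟩) j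
  -- parts
  have hC' : ∀ j, ∃ i, c' j ∈ B i := by
    intro j
    rcases split j with ⟨t, rfl⟩ | ⟨t, rfl⟩
    · rw [c'_left]; exact exB _ (notA_of_notAJ (hc (e t)))
    · rw [c'_right]; rcases hbJ t with ⟨i, _, h⟩; exact ⟨i, h⟩
  have hD' : ∀ j, ∃ i, d' j ∈ B i := by
    intro j
    rcases split j with ⟨t, rfl⟩ | ⟨t, rfl⟩
    · rw [d'_left]; exact exB _ (notA_of_notAJ (hd (e t)))
    · rw [d'_right]; rcases hbJ t with ⟨i, _, h⟩; exact ⟨i, h⟩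
  set idxc : Fin (s.card + F.card) → I := fun j => (hC' j).choose with hidxc
  set idxd : Fin (s.card + F.card) → I := fun j => (hD' j).choose with hidxd
  have idxc_mem : ∀ j, c' j ∈ B (idxc j) := fun j => (hC' j).choose_spec
  have idxd_mem : ∀ j, d' j ∈ B (idxd j) := fun j => (hD' j).choose_spec
  have idxc_left_notJ : ∀ t, idxc (Fin.castAdd F.card t) ∉ J := by
    intro t
    apply notJ_of_notAJ (x := c' (Fin.castAdd F.card t))
    · rw [c'_left]; exact hc (e t)
    · exact idxc_mem _
  have idxc_right_J : ∀ t, idxc (Fin.natAdd s.card t) ∈ J := by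
    intro t
    rcases hbJ t with ⟨i, hiJ, hbi⟩
    have : idxc (Fin.natAdd s.card t) = i :=
      part_unique (idxc_mem _) (by rw [c'_right]; exact hbi)
    rw [this]; exact hiJ
  have idxd_left_notJ : ∀ t, idxd (Fin.castAdd F.card t) ∉ J := by
    intro t
    apply notJ_of_notAJ (x := d' (Fin.castAdd F.card t))
    · rw [d'_left]; exact hd (e t)
    · exact idxd_mem _
  have idxd_right_J : ∀ t, idxd (Fin.natAdd s.card t) ∈ J := by
    intro t
    rcases hbJ t with ⟨i, hiJ, hbi⟩
    have : idxd (Fin.natAdd s.card t) = i :=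
      part_unique (idxd_mem _) (by rw [d'_right]; exact hbi)
    rw [this]; exact hiJ
  have idxc_char : ∀ j j', (idxc j = idxc j' ↔ ∃ i, c' j ∈ B i ∧ c' j' ∈ B i) := by
    intro j j'
    constructor
    · intro h; exact ⟨idxc j, idxc_mem j, h ▸ idxc_mem j'⟩
    · rintro ⟨i, h1, h2⟩
      rw [part_unique (idxc_mem j) h1, part_unique (idxc_mem j') h2]
  have idxd_char : ∀ j j', (idxd j = idxd j' ↔ ∃ i, d' j ∈ B i ∧ d' j' ∈ B i) := by
    intro j j'
    constructor
    · intro h; exact ⟨idxd j, idxd_mem j, h ▸ idxd_mem j'⟩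
    · rintro ⟨i, h1, h2⟩
      rw [part_unique (idxd_mem j) h1, part_unique (idxd_mem j') h2]
  have Hpt' : ∀ j j', (∃ i, c' j ∈ B i ∧ c' j' ∈ B i) ↔ (∃ i, d' j ∈ B i ∧ d' j' ∈ B i) := by
    intro j j'
    rcases split j with ⟨t, rfl⟩ | ⟨t, rfl⟩ <;> rcases split j' with ⟨t', rfl⟩ | ⟨t', rfl⟩
    · simp only [c'_left, d'_left]
      exact Hpt (e t) (e t')
    · apply iff_of_false
      · rintro ⟨i, h1, h2⟩
        rw [c'_left] at h1
        rw [c'_right] at h2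
        rcases hbJ t' with ⟨i0, hi0, hb0⟩
        exact notJ_of_notAJ (hc (e t)) h1 ((part_unique h2 hb0) ▸ hi0)
      · rintro ⟨i, h1, h2⟩
        rw [d'_left] at h1
        rw [d'_right] at h2
        rcases hbJ t' with ⟨i0, hi0, hb0⟩
        exact notJ_of_notAJ (hd (e t)) h1 ((part_unique h2 hb0) ▸ hi0)
    · apply iff_of_false
      · rintro ⟨i, h1, h2⟩
        rw [c'_right] at h1
        rw [c'_left] at h2
        rcases hbJ t with ⟨i0, hi0, hb0⟩
        exact notJ_of_notAJ (hc (e t')) h2 ((part_unique h1 hb0) ▸ hi0)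
      · rintro ⟨i, h1, h2⟩
        rw [d'_right] at h1
        rw [d'_left] at h2
        rcases hbJ t with ⟨i0, hi0, hb0⟩
        exact notJ_of_notAJ (hd (e t')) h2 ((part_unique h1 hb0) ▸ hi0)
    · simp only [c'_right, d'_right]
  have Hidx : ∀ j j', idxc j = idxc j' ↔ idxd j = idxd j' :=
    fun j j' => (idxc_char j j').trans ((Hpt' j j').trans (idxd_char j j').symm)
  -- the partition into pieces
  have honep : ∀ j, j ∈ Finset.univ.filter (fun j' => idxc j' = idxc j) := by
    intro j; simp
  set prep : Fin (s.card + F.card) → Fin (s.card + F.card) :=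
    fun j => (Finset.univ.filter (fun j' => idxc j' = idxc j)).min' ⟨j, honep j⟩ with hprepdef
  have hprep : ∀ j, idxc (prep j) = idxc j := by
    intro j
    have h1 : prep j ∈ Finset.univ.filter (fun j' => idxc j' = idxc j) := by
      simp only [hprepdef]; exact Finset.min'_mem _ _
    exact (Finset.mem_filter.mp h1).2
  have prep_eq_of : ∀ j j', idxc j = idxc j' → prep j = prep j' := by
    intro j j' h
    apply le_antisymm
    · rw [hprepdef]
      apply Finset.min'_le
      exact Finset.mem_filter.mpr ⟨Finset.mem_univ _, (hprep j').trans h.symm⟩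
    · rw [hprepdef]
      apply Finset.min'_le
      exact Finset.mem_filter.mpr ⟨Finset.mem_univ _, (hprep j).trans h⟩
  have prep_idem : ∀ j, prep (prep j) = prep j := fun j => prep_eq_of _ _ (hprep j)
  set ts : Finset (Fin (s.card + F.card)) := Finset.univ.image prep with hts
  set em : Fin ts.card → Fin (s.card + F.card) := fun ℓ => ((ts.orderIsoOfFin rfl) ℓ : _)
    with hem
  have em_mem : ∀ ℓ, em ℓ ∈ ts := fun ℓ => ((ts.orderIsoOfFin rfl) ℓ).2
  have em_inj : Function.Injective em := by
    intro t t' h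
    exact (ts.orderIsoOfFin rfl).injective (Subtype.ext h)
  have prep_mem_ts : ∀ j, prep j ∈ ts := fun j => Finset.mem_image_of_mem prep (Finset.mem_univ j)
  have prep_fix : ∀ x ∈ ts, prep x = x := by
    intro x hx
    rcases Finset.mem_image.mp hx with ⟨j, _, rfl⟩
    exact prep_idem j
  set P : Fin (s.card + F.card) → Fin ts.card :=
    fun j => (ts.orderIsoOfFin rfl).symm ⟨prep j, prep_mem_ts j⟩ with hP
  have em_P : ∀ j, em (P j) = prep j := by
    intro j
    rw [hem, hP]
    simp
  set fc : Fin ts.card → I := fun ℓ => idxc (em ℓ) with hfc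
  set fd : Fin ts.card → I := fun ℓ => idxd (em ℓ) with hfd
  have fc_inj : Function.Injective fc := by
    intro ℓ ℓ' h
    simp only [hfc] at h
    have h2 : prep (em ℓ) = prep (em ℓ') := prep_eq_of _ _ h
    rw [prep_fix _ (em_mem ℓ), prep_fix _ (em_mem ℓ')] at h2
    exact em_inj h2
  have fd_inj : Function.Injective fd := by
    intro ℓ ℓ' h
    simp only [hfd] at h
    apply fc_inj
    show idxc (em ℓ) = idxc (em ℓ')
    exact (Hidx _ _).mpr h
  have memBc : ∀ j, c' j ∈ B (fc (P j)) := by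
    intro j
    have h1 : fc (P j) = idxc j := by simp only [hfc]; rw [em_P]; exact hprep j
    rw [h1]; exact idxc_mem j
  have memBd : ∀ j, d' j ∈ B (fd (P j)) := by
    intro j
    have h1 : fd (P j) = idxd j := by
      simp only [hfd]; rw [em_P]
      exact (Hidx (prep j) j).mp (hprep j)
    rw [h1]; exact idxd_mem j
  -- injectivity of the extended tuples
  have c'_inj : Function.Injective c' := by
    intro j1 j2
    rcases split j1 with ⟨t1, rfl⟩ | ⟨t1, rfl⟩ <;>
      rcases split j2 with ⟨t2, rfl⟩ | ⟨t2, rfl⟩ <;> intro h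
    · rw [c'_left, c'_left] at h; exact congrArg (Fin.castAdd F.card) (ce_inj _ _ h)
    · rw [c'_left, c'_right] at h
      exact absurd (h ▸ hbAJ t2) (hc (e t1))
    · rw [c'_right, c'_left] at h
      exact absurd (h ▸ hbAJ t1) (hc (e t2))
    · rw [c'_right, c'_right] at h; exact congrArg (Fin.natAdd s.card) (hb_inj h)
  have d'_inj : Function.Injective d' := by
    intro j1 j2
    rcases split j1 with ⟨t1, rfl⟩ | ⟨t1, rfl⟩ <;>
      rcases split j2 with ⟨t2, rfl⟩ | ⟨t2, rfl⟩ <;> intro h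
    · rw [d'_left, d'_left] at h
      exact congrArg (Fin.castAdd F.card) (ce_inj _ _ ((Heq _ _).mpr h))
    · rw [d'_left, d'_right] at h
      exact absurd (h ▸ hbAJ t2) (hd (e t1))
    · rw [d'_right, d'_left] at h
      exact absurd (h ▸ hbAJ t1) (hd (e t2))
    · rw [d'_right, d'_right] at h; exact congrArg (Fin.natAdd s.card) (hb_inj h)
  -- the pieces have the same Δ-types over A
  have pieces : ∀ ℓ : Fin ts.card,
      DType Δ A (fun j : {j // P j = ℓ} => c' j) = DType Δ A (fun j : {j // P j = ℓ} => d' j) := by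
    intro ℓ
    have hidx_piece : ∀ j : {j // P j = ℓ}, idxc (j : Fin (s.card + F.card)) = idxc (em ℓ) := by
      rintro ⟨j, hj⟩
      show idxc j = _
      rw [← hj, em_P]
      exact (hprep j).symm
    rcases split (em ℓ) with ⟨t0, ht0⟩ | ⟨t0, ht0⟩
    · -- left piece
      have hleft : ∀ j : {j // P j = ℓ}, ∃ t, (j : Fin (s.card + F.card)) = Fin.castAdd F.card t := by
        intro j
        rcases split (j : Fin (s.card + F.card)) with h | ⟨t, ht⟩
        · exact h
        · exfalso
          have h1 : idxc (j : Fin (s.card + F.card)) ∈ J := by rw [ht]; exact idxc_right_J t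
          have h2 : idxc (j : Fin (s.card + F.card)) ∉ J := by
            rw [hidx_piece j, ht0]; exact idxc_left_notJ t0
          exact h2 h1
      set g : {j // P j = ℓ} → Fin k := fun j => e ((hleft j).choose) with hg
      have hgc : (fun j : {j // P j = ℓ} => c' j) = fun j => c (g j) := by
        funext j
        show c' (j : Fin (s.card + F.card)) = c (e ((hleft j).choose))
        conv_lhs => rw [(hleft j).choose_spec]
        exact c'_left _
      have hgd : (fun j : {j // P j = ℓ} => d' j) = fun j => d (g j) := by
        funext j
        show d' (j : Fin (s.card + F.card)) = d (e ((hleft j).choose))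
        conv_lhs => rw [(hleft j).choose_spec]
        exact d'_left _
      exact (congrArg (fun u : {j // P j = ℓ} → N => DType Δ A u) hgc).trans
        ((DType_comp_congr Δ A g HT).trans
          (congrArg (fun u : {j // P j = ℓ} → N => DType Δ A u) hgd).symm)
    · -- right piece
      have hright : ∀ j : {j // P j = ℓ}, ∃ t, (j : Fin (s.card + F.card)) = Fin.natAdd s.card t := by
        intro j
        rcases split (j : Fin (s.card + F.card)) with ⟨t, ht⟩ | h
        · exfalso
          have h1 : idxc (j : Fin (s.card + F.card)) ∉ J := by rw [ht]; exact idxc_left_notJ t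
          have h2 : idxc (j : Fin (s.card + F.card)) ∈ J := by
            rw [hidx_piece j, ht0]; exact idxc_right_J t0
          exact h1 h2
        · exact h
      have hcd : (fun j : {j // P j = ℓ} => c' j) = fun j : {j // P j = ℓ} => d' j := by
        funext j
        rcases hright j with ⟨t, ht⟩
        show c' (j : Fin (s.card + F.card)) = d' (j : Fin (s.card + F.card))
        rw [ht, c'_right, d'_right]
      exact congrArg (fun u : {j // P j = ℓ} → N => DType Δ A u) hcd
  have simd : SimD Δ A B c' d' :=
    ⟨c'_inj, d'_inj, ts.card, P, fc, fd, fc_inj, fd_inj, memBc, memBd, pieces⟩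
  have hc'A : ∀ j, c' j ∉ A := by
    intro j
    rcases split j with ⟨t, rfl⟩ | ⟨t, rfl⟩
    · rw [c'_left]; exact notA_of_notAJ (hc (e t))
    · rw [c'_right]; exact hbnA t
  have hd'A : ∀ j, d' j ∉ A := by
    intro j
    rcases split j with ⟨t, rfl⟩ | ⟨t, rfl⟩
    · rw [d'_left]; exact notA_of_notAJ (hd (e t))
    · rw [d'_right]; exact hbnA t
  have HT' : DType Δ A c' = DType Δ A d' := hcong _ c' d' hc'A hd'A simd
  -- transfer of the formula
  have hchoice : ∀ i : Fin n, ∃ y : Fin (s.card + F.card) ⊕ ↥A,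
      Sum.elim c' (fun a : ↥A => (a : N)) y = Sum.elim c (fun a : ↥AJ => (a : N)) (v i) ∧
      Sum.elim d' (fun a : ↥A => (a : N)) y = Sum.elim d (fun a : ↥AJ => (a : N)) (v i) := by
    intro i
    rcases hv : v i with j | a
    · refine ⟨Sum.inl (Fin.castAdd F.card (esymm j)), ?_, ?_⟩
      · show c' (Fin.castAdd F.card (esymm j)) = c j
        rw [c'_left, he_esymm, hrp]
      · show d' (Fin.castAdd F.card (esymm j)) = d j
        rw [d'_left, he_esymm, rp_d]
    · by_cases ha : (a : N) ∈ A
      · exact ⟨Sum.inr ⟨(a : N), ha⟩, rfl, rfl⟩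
      · have haF : (a : N) ∈ F := hF_mem i a hv ha
        refine ⟨Sum.inl (Fin.natAdd s.card (F.equivFin ⟨(a : N), haF⟩)), ?_, ?_⟩
        · show c' (Fin.natAdd s.card _) = (a : N)
          rw [c'_right, hb_Finv]
        · show d' (Fin.natAdd s.card _) = (a : N)
          rw [d'_right, hb_Finv]
  set y : Fin n → Fin (s.card + F.card) ⊕ ↥A := fun i => (hchoice i).choose with hy
  have hy1 : ∀ i, Sum.elim c' (fun a : ↥A => (a : N)) (y i)
      = Sum.elim c (fun a : ↥AJ => (a : N)) (v i) := fun i => ((hchoice i).choose_spec).1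
  have hy2 : ∀ i, Sum.elim d' (fun a : ↥A => (a : N)) (y i)
      = Sum.elim d (fun a : ↥AJ => (a : N)) (v i) := fun i => ((hchoice i).choose_spec).2
  have key1 : (⟨n, φ, y⟩ : Σ n, L.Formula (Fin n) × (Fin n → Fin (s.card + F.card) ⊕ ↥A))
      ∈ DType Δ A c' := by
    refine ⟨hpΔ, ?_⟩
    convert hpR using 2
    rename_i i
    dsimp only
    calc _ = Sum.elim c' (fun a : ↥A => (a : N)) (y i) := by rcases y i with j | a <;> rfl
      _ = Sum.elim c (fun a : ↥AJ => (a : N)) (v i) := hy1 i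
      _ = _ := by rcases v i with j | a <;> rfl
  have key2 : (⟨n, φ, y⟩ : Σ n, L.Formula (Fin n) × (Fin n → Fin (s.card + F.card) ⊕ ↥A))
      ∈ DType Δ A d' := HT' ▸ key1
  refine ⟨hpΔ, ?_⟩
  have hr2 := key2.2
  convert hr2 using 2
  rename_i i
  dsimp only
  calc _ = Sum.elim d (fun a : ↥AJ => (a : N)) (v i) := by rcases v i with j | a <;> rfl
    _ = Sum.elim d' (fun a : ↥A => (a : N)) (y i) := (hy2 i).symm
    _ = _ := by rcases y i with j | a <;> rfl

lemma key_eq {I : Type} (Δ : Set (Σ n, L.Formula (Fin n))) (A : Set N) (B : I → Set N)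
    (hdisjA : ∀ i, Disjoint A (B i)) (hdisj : ∀ i j, i ≠ j → Disjoint (B i) (B j))
    (hcover : A ∪ ⋃ i, B i = Set.univ)
    (hcong : IsCongruence Δ A B) (J : Set I) {k : ℕ} {c d : Fin k → N}
    (hc : ∀ j, c j ∉ A ∪ ⋃ j' ∈ J, B j') (hd : ∀ j, d j ∉ A ∪ ⋃ j' ∈ J, B j')
    (Heq : ∀ j j', c j = c j' ↔ d j = d j')
    (Hpt : ∀ j j', (∃ i, c j ∈ B i ∧ c j' ∈ B i) ↔ (∃ i, d j ∈ B i ∧ d j' ∈ B i))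
    (HT : DType Δ A c = DType Δ A d) :
    DType Δ (A ∪ ⋃ j' ∈ J, B j') c = DType Δ (A ∪ ⋃ j' ∈ J, B j') d :=
  Set.Subset.antisymm
    (key_subset Δ A B hdisjA hdisj hcover hcong J hc hd Heq Hpt HT)
    (key_subset Δ A B hdisjA hdisj hcover hcong J hd hc
      (fun j j' => (Heq j j').symm) (fun j j' => (Hpt j j').symm) HT.symm)

set_option maxHeartbeats 1000000 in
/-- if `N = A ⊔ ⨆ᵢ B i` is a `(κ,Δ)`-decomposition (a `κ`-partition that is a
`Δ`-congruence over `A`), with `κ` infinite and `|Δ| ≤ κ`, then for every `J ⊆ I`, at most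
`2 ^ κ` many `Δ`-types over `A ∪ B_J` are realized by finite tuples from `N - (A ∪ B_J)`. -/
theorem stmt2 {I : Type} (κ : Cardinal.{0}) (hκ : ℵ₀ ≤ κ)
    (Δ : Set (Σ n, L.Formula (Fin n))) (hΔ : #Δ ≤ κ)
    (A : Set N) (B : I → Set N) (hA : #A ≤ κ) (hB : ∀ i, #(B i) ≤ κ)
    (hdisjA : ∀ i, Disjoint A (B i)) (hdisj : ∀ i j, i ≠ j → Disjoint (B i) (B j))
    (hcover : A ∪ ⋃ i, B i = Set.univ)
    (hcong : IsCongruence Δ A B) :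
    ∀ J : Set I, #(RealizedTypes Δ (A ∪ ⋃ j ∈ J, B j)) ≤ 2 ^ κ := by
  classical
  intro J
  set AJ : Set N := A ∪ ⋃ j ∈ J, B j with hAJdef
  have hwit : ∀ q : ↥(RealizedTypes Δ AJ), ∃ c : Fin q.1.1 → N,
      (∀ j, c j ∉ AJ) ∧ q.1.2 = DType Δ AJ c := fun q => q.2
  set wit : (q : ↥(RealizedTypes Δ AJ)) → Fin q.1.1 → N := fun q => (hwit q).choose with hwitdef
  have hwit1 : ∀ q, ∀ j, wit q j ∉ AJ := fun q => (hwit q).choose_spec.1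
  have hwit2 : ∀ q, q.1.2 = DType Δ AJ (wit q) := fun q => (hwit q).choose_spec.2
  set G : ↥(RealizedTypes Δ AJ) → Σ k : ℕ, ((Fin k → Fin k → Prop) × (Fin k → Fin k → Prop) ×
      Set (Σ δ : ↥Δ, Fin δ.1.1 → Fin k ⊕ ↥A)) := fun q =>
    ⟨q.1.1, fun j j' => wit q j = wit q j',
      fun j j' => ∃ i, wit q j ∈ B i ∧ wit q j' ∈ B i,
      { p : Σ δ : ↥Δ, Fin δ.1.1 → Fin q.1.1 ⊕ ↥A |
        p.1.1.2.Realize (fun i => Sum.elim (wit q) (fun b => (b : N)) (p.2 i)) }⟩ with hGdef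
  have hGinj : Function.Injective G := by
    intro q q' hG
    have hk0 : (G q).1 = (G q').1 := congrArg Sigma.fst hG
    have hk : q.1.1 = q'.1.1 := hk0
    obtain ⟨⟨k, S⟩, hq⟩ := q
    obtain ⟨⟨k', S'⟩, hq'⟩ := q'
    simp only at hk
    subst hk
    have h2' := eq_of_heq (Sigma.mk.inj_iff.mp hG).2
    have hE1 := congrArg Prod.fst h2'
    have hE2 := congrArg (fun z => z.2.1) h2'
    set c : Fin k → N := wit ⟨⟨k, S⟩, hq⟩ with hcdef
    set d : Fin k → N := wit ⟨⟨k, S'⟩, hq'⟩ with hddef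
    have hE3 : ({ p : Σ δ : ↥Δ, Fin δ.1.1 → Fin k ⊕ ↥A |
          p.1.1.2.Realize (fun i => Sum.elim c (fun b => (b : N)) (p.2 i)) })
        = { p : Σ δ : ↥Δ, Fin δ.1.1 → Fin k ⊕ ↥A |
          p.1.1.2.Realize (fun i => Sum.elim d (fun b => (b : N)) (p.2 i)) } :=
      congrArg (fun z => z.2.2) h2' 
    have Heq : ∀ j j', c j = c j' ↔ d j = d j' := by
      intro j j'
      exact iff_of_eq (congrFun (congrFun hE1 j) j')
    have Hpt : ∀ j j', (∃ i, c j ∈ B i ∧ c j' ∈ B i) ↔ (∃ i, d j ∈ B i ∧ d j' ∈ B i) := by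
      intro j j'
      exact iff_of_eq (congrFun (congrFun hE2 j) j')
    have HT : DType Δ A c = DType Δ A d := by
      ext p
      obtain ⟨nn, ψ, u⟩ := p
      constructor
      · rintro ⟨h1, h2⟩
        refine ⟨h1, ?_⟩
        have hmem : (⟨⟨⟨nn, ψ⟩, h1⟩, u⟩ : Σ δ : ↥Δ, Fin δ.1.1 → Fin k ⊕ ↥A) ∈
            { p : Σ δ : ↥Δ, Fin δ.1.1 → Fin k ⊕ ↥A |
              p.1.1.2.Realize (fun i => Sum.elim c (fun b => (b : N)) (p.2 i)) } := h2
        rw [hE3] at hmem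
        exact hmem
      · rintro ⟨h1, h2⟩
        refine ⟨h1, ?_⟩
        have hmem : (⟨⟨⟨nn, ψ⟩, h1⟩, u⟩ : Σ δ : ↥Δ, Fin δ.1.1 → Fin k ⊕ ↥A) ∈
            { p : Σ δ : ↥Δ, Fin δ.1.1 → Fin k ⊕ ↥A |
              p.1.1.2.Realize (fun i => Sum.elim d (fun b => (b : N)) (p.2 i)) } := h2
        rw [← hE3] at hmem
        exact hmem
    have hkey : DType Δ AJ c = DType Δ AJ d :=
      key_eq Δ A B hdisjA hdisj hcover hcong J
        (hwit1 ⟨⟨k, S⟩, hq⟩) (hwit1 ⟨⟨k, S'⟩, hq'⟩) Heq Hpt HT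
    have hS : S = S' := by
      have e1 : S = DType Δ AJ c := hwit2 ⟨⟨k, S⟩, hq⟩
      have e2 : S' = DType Δ AJ d := hwit2 ⟨⟨k, S'⟩, hq'⟩
      rw [e1, e2, hkey]
    apply Subtype.ext
    simp only [hS]
  have hle : #(RealizedTypes Δ AJ) ≤
      #(Σ k : ℕ, ((Fin k → Fin k → Prop) × (Fin k → Fin k → Prop) ×
        Set (Σ δ : ↥Δ, Fin δ.1.1 → Fin k ⊕ ↥A))) := Cardinal.mk_le_of_injective hGinj
  refine hle.trans ?_
  have h2κ : ℵ₀ ≤ 2 ^ κ := hκ.trans (Cardinal.cantor κ).le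
  have hsig : ∀ k : ℕ, #(Σ δ : ↥Δ, Fin δ.1.1 → Fin k ⊕ ↥A) ≤ κ := by
    intro k
    have hX : #(Fin k ⊕ ↥A) ≤ κ := by
      have hX1 : #(Fin k ⊕ ↥A) = (k : Cardinal) + #A := by
        simp [Cardinal.mk_sum, Cardinal.mk_fin]
      rw [hX1]
      calc (k : Cardinal) + #A ≤ κ + κ :=
            add_le_add ((Cardinal.nat_lt_aleph0 k).le.trans hκ) hA
        _ = κ := Cardinal.add_eq_self hκ
    have harrow : ∀ nδ : ℕ, #(Fin nδ → Fin k ⊕ ↥A) ≤ κ := by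
      intro nδ
      have h1 : #(Fin nδ → Fin k ⊕ ↥A) = #(Fin k ⊕ ↥A) ^ (nδ : Cardinal) := by
        simp [Cardinal.mk_arrow, Cardinal.mk_fin]
      rw [h1]
      calc #(Fin k ⊕ ↥A) ^ (nδ : Cardinal) ≤ κ ^ (nδ : Cardinal) :=
            Cardinal.power_le_power_right hX
        _ ≤ κ := Cardinal.power_nat_le hκ
    calc #(Σ δ : ↥Δ, Fin δ.1.1 → Fin k ⊕ ↥A)
        = Cardinal.sum (fun δ : ↥Δ => #(Fin δ.1.1 → Fin k ⊕ ↥A)) := Cardinal.mk_sigma _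
      _ ≤ Cardinal.sum (fun _ : ↥Δ => κ) :=
          Cardinal.sum_le_sum _ _ (fun δ => harrow _)
      _ = #↥Δ * κ := Cardinal.sum_const' ↥Δ κ
      _ ≤ κ * κ := mul_le_mul_left hΔ κ
      _ = κ := Cardinal.mul_eq_self hκ
  have hfin : ∀ k : ℕ, #(Fin k → Fin k → Prop) ≤ 2 ^ κ := by
    intro k
    exact (Cardinal.lt_aleph0_of_finite _).le.trans (hκ.trans (Cardinal.cantor κ).le)
  have hcomp : ∀ k : ℕ, #((Fin k → Fin k → Prop) × (Fin k → Fin k → Prop) ×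
      Set (Σ δ : ↥Δ, Fin δ.1.1 → Fin k ⊕ ↥A)) ≤ 2 ^ κ := by
    intro k
    have hset : #(Set (Σ δ : ↥Δ, Fin δ.1.1 → Fin k ⊕ ↥A)) ≤ 2 ^ κ := by
      rw [Cardinal.mk_set]
      exact Cardinal.power_le_power_left two_ne_zero (hsig k)
    have hprod : #((Fin k → Fin k → Prop) × (Fin k → Fin k → Prop) ×
        Set (Σ δ : ↥Δ, Fin δ.1.1 → Fin k ⊕ ↥A))
        = #(Fin k → Fin k → Prop) * (#(Fin k → Fin k → Prop) *
          #(Set (Σ δ : ↥Δ, Fin δ.1.1 → Fin k ⊕ ↥A))) := by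
      simp [Cardinal.mk_prod]
    rw [hprod]
    calc #(Fin k → Fin k → Prop) * (#(Fin k → Fin k → Prop) *
          #(Set (Σ δ : ↥Δ, Fin δ.1.1 → Fin k ⊕ ↥A)))
        ≤ (2 ^ κ) * ((2 ^ κ) * (2 ^ κ)) := mul_le_mul' (hfin k) (mul_le_mul' (hfin k) hset)
      _ = 2 ^ κ := by rw [Cardinal.mul_eq_self h2κ, Cardinal.mul_eq_self h2κ]
  calc #(Σ k : ℕ, ((Fin k → Fin k → Prop) × (Fin k → Fin k → Prop) ×
        Set (Σ δ : ↥Δ, Fin δ.1.1 → Fin k ⊕ ↥A)))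
      = Cardinal.sum (fun k : ℕ => #((Fin k → Fin k → Prop) × (Fin k → Fin k → Prop) ×
        Set (Σ δ : ↥Δ, Fin δ.1.1 → Fin k ⊕ ↥A))) := Cardinal.mk_sigma _
    _ ≤ Cardinal.sum (fun _ : ℕ => 2 ^ κ) := Cardinal.sum_le_sum _ _ (fun k => hcomp k)
    _ = #ℕ * 2 ^ κ := Cardinal.sum_const' ℕ (2 ^ κ)
    _ = ℵ₀ * 2 ^ κ := by rw [Cardinal.mk_nat]
    _ ≤ (2 ^ κ) * 2 ^ κ := mul_le_mul_left h2κ _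
    _ = 2 ^ κ := Cardinal.mul_eq_self h2κ
end

section
/- Let N be a structure consisting of an equivalence relation E with exactly two classes, each of cardinality ℵ₁. Then N admits no partition N = ⨆_{i∈I} B_i into countable parts such that: whenever a, b ∈ N lie in different parts and a', b' ∈ N lie in different parts, with a,a' having equal quantifier-free 1-types over ∅ and b,b' having equal quantifier-free 1-types over ∅, then the pairs (a,b) and (a',b') have the same quantifier-free type over ∅ (in particular E(a,b) ↔ E(a',b')). -/
open FirstOrder Cardinal

variable {L : FirstOrder.Language.{0,0}} {N : Type} [L.Structure N]

/-- An arbitrary binary relation `E` as a structure in the language with one binary relation. -/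
def relStructure {N : Type} (E : N → N → Prop) : FirstOrder.Language.graph.Structure N where
  RelMap | .adj => fun x => E (x 0) (x 1)

/-- The quantifier-free 1-type of `a` over `∅` in the structure `(N, E)`. -/
def qf1 {N : Type} (E : N → N → Prop) (a : N) :=
  @DType FirstOrder.Language.graph N (relStructure E) (QFset _) (∅ : Set N) (Fin 1) (fun _ => a)

/-- The quantifier-free type of the pair `(x, y)` over `∅` in the structure `(N, E)`. -/
def qf2 {N : Type} (E : N → N → Prop) (x y : N) :=
  @DType FirstOrder.Language.graph N (relStructure E) (QFset _) (∅ : Set N) (Fin 2) ![x, y]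

section helpers
open Language
variable {N : Type} (E : N → N → Prop)

lemma term_const_aux {α : Type*} (t : Language.graph.Term α) (env : α → N) (x : N)
    (h : ∀ a, env a = x) : @Term.realize Language.graph N (relStructure E) _ env t = x := by
  induction t with
  | var a => exact h a
  | func f ts ih => exact isEmptyElim f

lemma qf_const_iff (hE : Equivalence E) (x y : N) {α : Type} {l : ℕ}
    (φ : Language.graph.BoundedFormula α l) (hφ : φ.IsQF)
    (v : α → N) (xs : Fin l → N) (w : α → N) (ys : Fin l → N)
    (hv : ∀ a, v a = x) (hxs : ∀ a, xs a = x) (hw : ∀ a, w a = y) (hys : ∀ a, ys a = y) :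
    (@BoundedFormula.Realize Language.graph N (relStructure E) _ _ φ v xs ↔
     @BoundedFormula.Realize Language.graph N (relStructure E) _ _ φ w ys) := by
  induction hφ with
  | falsum => simp [BoundedFormula.Realize]
  | of_isAtomic h =>
    cases h with
    | equal t₁ t₂ =>
      simp only [BoundedFormula.realize_bdEqual]
      rw [term_const_aux E t₁ _ x, term_const_aux E t₂ _ x,
          term_const_aux E t₁ _ y, term_const_aux E t₂ _ y]
      · simp
      all_goals rintro (a | a) <;> simp [hv, hxs, hw, hys]
    | rel R ts =>
      cases R with
      | adj =>
        unfold BoundedFormula.Realize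
        have h1 : ∀ i, @Term.realize Language.graph N (relStructure E) _
            (Sum.elim v xs) (ts i) = x := fun i => by
          apply term_const_aux; rintro (a | a) <;> simp [hv, hxs]
        have h2 : ∀ i, @Term.realize Language.graph N (relStructure E) _
            (Sum.elim w ys) (ts i) = y := fun i => by
          apply term_const_aux; rintro (a | a) <;> simp [hw, hys]
        show E _ _ ↔ E _ _
        simp only [h1, h2]
        exact iff_of_true (hE.refl x) (hE.refl y)
  | imp _ _ ih1 ih2 => exact imp_congr ih1 ih2

lemma qf1_const (hE : Equivalence E) (x y : N) : qf1 E x = qf1 E y := by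
  ext p
  unfold qf1 DType
  simp only [Set.mem_setOf_eq]
  refine and_congr_right fun hQF => ?_
  apply qf_const_iff E hE x y _ hQF
  · intro a
    rcases h : p.2.2 a with j | b
    · rfl
    · exact b.2.elim
  · exact fun a => a.elim0
  · intro a
    rcases h : p.2.2 a with j | b
    · rfl
    · exact b.2.elim
  · exact fun a => a.elim0

def adjElem (N : Type) : Σ n, Language.graph.Formula (Fin n) × (Fin n → Fin 2 ⊕ ((∅ : Set N) : Set N)) :=
  ⟨2, Language.adj.formula₂ (Term.var 0) (Term.var 1), fun i => Sum.inl i⟩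

lemma adj_mem_qf2 (x y : N) : adjElem N ∈ qf2 E x y ↔ E x y := by
  letI := relStructure E
  unfold qf2 DType adjElem
  simp only [Set.mem_setOf_eq]
  rw [Formula.realize_rel₂]
  constructor
  · rintro ⟨-, h⟩
    exact h
  · intro h
    refine ⟨(BoundedFormula.IsAtomic.rel _ _).isQF, ?_⟩
    exact h

end helpers

lemma exists_outside {N : Type} {E : N → N → Prop} {a : N}
    (hca : #{x : N | E x a} = Cardinal.aleph 1) (S : Set N) (hS : S.Countable) :
    ∃ y, E y a ∧ y ∉ S := by
  by_contra h
  push_neg at h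
  have hsub : {x : N | E x a} ⊆ S := fun x hx => h x hx
  have : ({x : N | E x a} : Set N).Countable := hS.mono hsub
  have hle : #({x : N | E x a} : Set N) ≤ Cardinal.aleph0 := Cardinal.le_aleph0_iff_set_countable.mpr this
  rw [hca] at hle
  exact absurd (lt_of_lt_of_le Cardinal.aleph0_lt_aleph_one hle) (lt_irrefl _)

/-- if `E` is an equivalence relation on `N` with exactly two classes, each of
cardinality `ℵ₁`, then `N` admits no partition into countable parts such that the
quantifier-free type over `∅` of a cross-part pair `(a, b)` depends only on the quantifier-free
1-types over `∅` of `a` and of `b`. -/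
theorem stmt5 (N : Type) (E : N → N → Prop) (hE : Equivalence E)
    (a b : N) (hab : ¬ E a b) (hcover : ∀ x : N, E x a ∨ E x b)
    (hca : #{x : N | E x a} = Cardinal.aleph 1) (hcb : #{x : N | E x b} = Cardinal.aleph 1) :
    ¬ ∃ (ι : Type) (Bp : ι → Set N),
      (∀ i j : ι, i ≠ j → Disjoint (Bp i) (Bp j)) ∧ (⋃ i, Bp i) = Set.univ ∧
      (∀ i, (Bp i).Countable) ∧
      (∀ (x y x' y' : N) (i j i' j' : ι), i ≠ j → i' ≠ j' →
        x ∈ Bp i → y ∈ Bp j → x' ∈ Bp i' → y' ∈ Bp j' →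
        qf1 E x = qf1 E x' → qf1 E y = qf1 E y' → qf2 E x y = qf2 E x' y') := by
  rintro ⟨ι, Bp, hdisj, hcov, hcount, hcong⟩
  -- a lies in some part Bp i
  obtain ⟨i, hai⟩ : ∃ i, a ∈ Bp i := by
    have := hcov ▸ Set.mem_univ a
    simpa using Set.mem_iUnion.mp (hcov ▸ Set.mem_univ a)
  -- y1 : in class of a, outside Bp i
  obtain ⟨y1, hy1a, hy1i⟩ := exists_outside hca (Bp i) (hcount i)
  obtain ⟨j, hy1j⟩ : ∃ j, y1 ∈ Bp j := by
    simpa using Set.mem_iUnion.mp (hcov ▸ Set.mem_univ y1)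
  have hij : i ≠ j := fun h => hy1i (h ▸ hy1j)
  -- y2 : in class of b, outside Bp i
  obtain ⟨y2, hy2b, hy2i⟩ := exists_outside hcb (Bp i) (hcount i)
  obtain ⟨j', hy2j⟩ : ∃ j', y2 ∈ Bp j' := by
    simpa using Set.mem_iUnion.mp (hcov ▸ Set.mem_univ y2)
  have hij' : i ≠ j' := fun h => hy2i (h ▸ hy2j)
  have hq : qf2 E a y1 = qf2 E a y2 :=
    hcong a y1 a y2 i j i j' hij hij' hai hy1j hai hy2j (qf1_const E hE a a)
      (qf1_const E hE y1 y2)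
  have h1 : E a y1 := hE.symm hy1a
  have h2 : ¬ E a y2 := fun h => hab (hE.trans h hy2b)
  exact h2 ((adj_mem_qf2 E a y2).mp (hq ▸ (adj_mem_qf2 E a y1).mpr h1))
end
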